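/- The q-trinomial coefficients satisfy T(n, d+1, L) + q^{L-d} T(n+1, d, L) = q^L T(n+1, d+1, L) + q^n T(n, d, L) + (1 - q^n) T(n-1, d, L) for all integers n, d and L ≥ 0. -/

import Mathlib

/- `qq` plays the role of the formal variable `q`, as an element of the
field of rational functions over `ℚ`. -/
noncomputable def qq : RatFunc ℚ := RatFunc.X

/-- `(q)_n = ∏_{i=1}^n (1 - q^i)`. -/
noncomputable def qp (n : ℕ) : RatFunc ℚ := ∏ i ∈ Finset.range n, (1 - qq ^ (i + 1))

/-- `(q)_n` for an integer index, declared to be `0` for negative `n`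
(so that terms with a negative factorial index vanish upon division). -/
noncomputable def qpz (n : ℤ) : RatFunc ℚ := if 0 ≤ n then qp n.toNat else 0

/-- The Andrews–Baxter `q`-trinomial coefficient
`T(n,d,L) = Σ_k q^{k(k+d-n)} (q)_L / ((q)_k (q)_{k+d} (q)_{L-2k-d})`,
where terms with a negative factorial index are zero.  (Any term with a
nonzero contribution has `k ≤ L`, so the range below suffices.) -/
noncomputable def qT (n d : ℤ) (L : ℕ) : RatFunc ℚ :=
  ∑ k ∈ Finset.range (L + 1),
    qq ^ ((k : ℤ) * ((k : ℤ) + d - n)) * qp L /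
      (qp k * qpz ((k : ℤ) + d) * qpz ((L : ℤ) - 2 * k - d))

lemma qq_ne : qq ≠ 0 := RatFunc.X_ne_zero

lemma qq_pow_ne_one (m : ℕ) : qq ^ (m + 1) ≠ 1 := by
  intro h
  have hinj : Function.Injective (algebraMap (Polynomial ℚ) (RatFunc ℚ)) :=
    RatFunc.algebraMap_injective ℚ
  have : (Polynomial.X : Polynomial ℚ) ^ (m + 1) = 1 := by
    apply hinj
    rw [map_pow, map_one, RatFunc.algebraMap_X]
    exact h
  have := congrArg Polynomial.natDegree this
  simp [Polynomial.natDegree_X_pow] at this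

lemma one_sub_ne (m : ℕ) : (1 : RatFunc ℚ) - qq ^ (m + 1) ≠ 0 :=
  sub_ne_zero_of_ne (Ne.symm (qq_pow_ne_one m))

lemma qp_ne_zero (m : ℕ) : qp m ≠ 0 := by
  unfold qp
  rw [Finset.prod_ne_zero_iff]
  exact fun i _ => one_sub_ne i

lemma qp_succ (m : ℕ) : qp (m + 1) = qp m * (1 - qq ^ (m + 1)) := Finset.prod_range_succ _ m

lemma qp_zero : qp 0 = 1 := rfl

lemma qpz_coe (m : ℕ) : qpz (m : ℤ) = qp m := by simp [qpz]

lemma qpz_neg {m : ℤ} (h : m < 0) : qpz m = 0 := if_neg (not_le.mpr h)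

lemma div_qpz_pred (x z : RatFunc ℚ) (m : ℕ) :
    x / (z * qpz ((m : ℤ) - 1)) = x * (1 - qq ^ m) / (z * qp m) := by
  cases m with
  | zero =>
      have h : qpz (-1 : ℤ) = 0 := qpz_neg (by norm_num)
      norm_num [h]
  | succ m =>
      rw [show ((m + 1 : ℕ) : ℤ) - 1 = (m : ℤ) by push_cast; ring, qpz_coe, qp_succ,
        show z * (qp m * (1 - qq ^ (m+1))) = z * qp m * (1 - qq ^ (m+1)) by ring,
        show x * (1 - qq ^ (m+1)) / (z * qp m * (1 - qq ^ (m+1)))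
          = x * (1 - qq ^ (m+1)) / (1 - qq ^ (m+1)) / (z * qp m) by rw [div_div]; ring_nf,
        mul_div_assoc, div_self (one_sub_ne m), mul_one]

noncomputable def Wf (n d : ℤ) (L j : ℕ) : RatFunc ℚ :=
  qq ^ n * qq ^ ((j : ℤ) * ((j : ℤ) + d - n)) * (1 - qq ^ (j : ℤ)) * qp L /
    (qp j * qpz ((j : ℤ) + d) * qpz ((L : ℤ) - 2 * j - d))

lemma Wf_zero (n d : ℤ) (L : ℕ) : Wf n d L 0 = 0 := by
  simp [Wf]

lemma Wf_top (n d : ℤ) (L : ℕ) : Wf n d L (L + 1) = 0 := by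
  by_cases h : ((L + 1 : ℕ) : ℤ) + d < 0
  · rw [Wf, qpz_neg h]; simp
  · have h2 : (L : ℤ) - 2 * ((L + 1 : ℕ) : ℤ) - d < 0 := by push_cast at h ⊢; omega
    rw [Wf, qpz_neg h2]; simp

set_option maxHeartbeats 1000000 in
lemma termwise (n d : ℤ) (L k : ℕ) (hk : k ≤ L) :
    (qq ^ ((k : ℤ) * ((k : ℤ) + (d + 1) - n)) * qp L /
        (qp k * qpz ((k : ℤ) + (d + 1)) * qpz ((L : ℤ) - 2 * k - (d + 1)))
      + qq ^ ((L : ℤ) - d) * (qq ^ ((k : ℤ) * ((k : ℤ) + d - (n + 1))) * qp L /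
        (qp k * qpz ((k : ℤ) + d) * qpz ((L : ℤ) - 2 * k - d))))
    - (qq ^ (L : ℤ) * (qq ^ ((k : ℤ) * ((k : ℤ) + (d + 1) - (n + 1))) * qp L /
        (qp k * qpz ((k : ℤ) + (d + 1)) * qpz ((L : ℤ) - 2 * k - (d + 1))))
      + qq ^ n * (qq ^ ((k : ℤ) * ((k : ℤ) + d - n)) * qp L /
        (qp k * qpz ((k : ℤ) + d) * qpz ((L : ℤ) - 2 * k - d)))
      + (1 - qq ^ n) * (qq ^ ((k : ℤ) * ((k : ℤ) + d - (n - 1))) * qp L /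
        (qp k * qpz ((k : ℤ) + d) * qpz ((L : ℤ) - 2 * k - d))))
    = Wf n d L (k + 1) - Wf n d L k := by
  rcases lt_or_ge ((k : ℤ) + d) 0 with ha | ha
  · by_cases h1 : (k : ℤ) + d = -1
    · -- a = -1
      have e1 : qpz ((k : ℤ) + d) = 0 := qpz_neg ha
      rcases eq_or_lt_of_le hk with hkL | hkL
      · -- k = L
        subst hkL
        have e3 : qpz ((k : ℤ) - 2 * ((k + 1 : ℕ) : ℤ) - d) = 0 := qpz_neg (by push_cast; omega)
        have q3 : qpz ((k : ℤ) + (d + 1)) = 1 := by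
          rw [show (k : ℤ) + (d + 1) = ((0 : ℕ) : ℤ) by omega, qpz_coe, qp_zero]
        have qA : qpz ((k : ℤ) - 2 * (k : ℤ) - (d + 1)) = 1 := by
          rw [show (k : ℤ) - 2 * (k : ℤ) - (d + 1) = ((0 : ℕ) : ℤ) by omega, qpz_coe, qp_zero]
        have eC : (k : ℤ) * ((k : ℤ) + (d + 1) - (n + 1))
            = (k : ℤ) * ((k : ℤ) + (d + 1) - n) + (-(k : ℤ)) := by ring
        rw [Wf, Wf, eC, e1, q3, qA]
        simp only [qpz_coe, qp_zero, mul_zero, zero_mul, div_zero, mul_one,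
          zpow_add₀ qq_ne, zpow_neg, zpow_natCast, e3]
        have hx : qq ^ k ≠ 0 := pow_ne_zero k qq_ne
        field_simp
        ring
      · -- k < L
        obtain ⟨m, hm⟩ : ∃ m, L = k + m + 1 := ⟨L - k - 1, by omega⟩
        subst hm
        have q3 : qpz ((k : ℤ) + (d + 1)) = 1 := by
          rw [show (k : ℤ) + (d + 1) = ((0 : ℕ) : ℤ) by omega, qpz_coe, qp_zero]
        have qA : qpz (((k + m + 1 : ℕ) : ℤ) - 2 * (k : ℤ) - (d + 1)) = qp (m + 1) := by
          rw [show ((k + m + 1 : ℕ) : ℤ) - 2 * (k : ℤ) - (d + 1) = ((m + 1 : ℕ) : ℤ) by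
            push_cast; omega, qpz_coe]
        have qW5 : qpz (((k + 1 : ℕ) : ℤ) + d) = 1 := by
          rw [show ((k + 1 : ℕ) : ℤ) + d = ((0 : ℕ) : ℤ) by push_cast; omega, qpz_coe, qp_zero]
        have qW6 : qpz (((k + m + 1 : ℕ) : ℤ) - 2 * ((k + 1 : ℕ) : ℤ) - d) = qp m := by
          rw [show ((k + m + 1 : ℕ) : ℤ) - 2 * ((k + 1 : ℕ) : ℤ) - d = ((m : ℕ) : ℤ) by
            push_cast; omega, qpz_coe]
        have eA : (k : ℤ) * ((k : ℤ) + (d + 1) - n)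
            = (k : ℤ) * ((k : ℤ) + (d + 1) - (n + 1)) + ((k : ℕ) : ℤ) := by push_cast; ring
        have eW : n + ((k + 1 : ℕ) : ℤ) * (((k + 1 : ℕ) : ℤ) + d - n)
            = (k : ℤ) * ((k : ℤ) + (d + 1) - (n + 1)) + ((k : ℕ) : ℤ) := by
          push_cast; linear_combination h1
        rw [Wf, Wf,
          ← zpow_add₀ qq_ne n (((k + 1 : ℕ) : ℤ) * (((k + 1 : ℕ) : ℤ) + d - n)),
          eA, eW, e1, q3, qA, qW5, qW6]
        simp only [mul_zero, zero_mul, div_zero, mul_one, zpow_add₀ qq_ne, zpow_natCast]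
        rw [qp_succ m, qp_succ k]
        have h2 := qp_ne_zero k
        have h3 := qp_ne_zero m
        have hsk := one_sub_ne k
        have hsm := one_sub_ne m
        generalize hSk : (1 : RatFunc ℚ) - qq ^ (k + 1) = Sk at hsk ⊢
        generalize hSm : (1 : RatFunc ℚ) - qq ^ (m + 1) = Sm at hsm ⊢
        field_simp
        rw [← hSm]
        ring
    · -- a ≤ -2 : everything vanishes
      have e1 : qpz ((k : ℤ) + d) = 0 := qpz_neg ha
      have e2 : qpz ((k : ℤ) + (d + 1)) = 0 := qpz_neg (by omega)
      have e3 : qpz (((k + 1 : ℕ) : ℤ) + d) = 0 := qpz_neg (by push_cast; omega)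
      rw [Wf, Wf, e1, e2, e3]
      simp
  · obtain ⟨A, hA⟩ : ∃ A : ℕ, (k : ℤ) + d = (A : ℤ) :=
      ⟨((k : ℤ) + d).toNat, (Int.toNat_of_nonneg ha).symm⟩
    rcases lt_trichotomy ((L : ℤ) - 2 * k - d) 0 with hb | hb | hb
    · -- b < 0 : everything vanishes
      have e4 : qpz ((L : ℤ) - 2 * k - d) = 0 := qpz_neg hb
      have e5 : qpz ((L : ℤ) - 2 * k - (d + 1)) = 0 := qpz_neg (by omega)
      have e6 : qpz ((L : ℤ) - 2 * ((k + 1 : ℕ) : ℤ) - d) = 0 := qpz_neg (by push_cast; omega)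
      rw [Wf, Wf, e4, e5, e6]
      simp
    · -- b = 0
      have hL : L = k + A := by omega
      subst hL
      have e5 : qpz (((k + A : ℕ) : ℤ) - 2 * k - (d + 1)) = 0 := qpz_neg (by push_cast; omega)
      have e6 : qpz (((k + A : ℕ) : ℤ) - 2 * ((k + 1 : ℕ) : ℤ) - d) = 0 :=
        qpz_neg (by push_cast; omega)
      have q2 : qpz (((k + A : ℕ) : ℤ) - 2 * (k : ℤ) - d) = 1 := by
        rw [show ((k + A : ℕ) : ℤ) - 2 * (k : ℤ) - d = ((0 : ℕ) : ℤ) by push_cast; omega,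
          qpz_coe, qp_zero]
      have q4 : qpz ((k : ℤ) + d) = qp A := by rw [hA, qpz_coe]
      have rLd : ((k + A : ℕ) : ℤ) - d = ((2 * k : ℕ) : ℤ) := by push_cast; omega
      have eB : (k : ℤ) * ((k : ℤ) + d - (n + 1))
          = (k : ℤ) * ((k : ℤ) + d - n) + (-(k : ℤ)) := by ring
      have eE : (k : ℤ) * ((k : ℤ) + d - (n - 1))
          = (k : ℤ) * ((k : ℤ) + d - n) + ((k : ℕ) : ℤ) := by push_cast; ring
      rw [Wf, Wf, eB, eE, e5, e6, q2, q4, rLd]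
      simp only [qpz_coe, qp_zero, mul_zero, zero_mul, div_zero, mul_one,
        zpow_add₀ qq_ne, zpow_neg, zpow_natCast]
      have hx : qq ^ k ≠ 0 := pow_ne_zero k qq_ne
      have h2 := qp_ne_zero k
      have h3 := qp_ne_zero A
      field_simp
      ring
    · -- b ≥ 1 : main case
      obtain ⟨B, hB⟩ : ∃ B : ℕ, (L : ℤ) - 2 * k - d = (B : ℤ) + 1 :=
        ⟨((L : ℤ) - 2 * k - d - 1).toNat, by omega⟩
      have hL : L = k + A + B + 1 := by omega
      subst hL
      have q1 : qpz (((k + A + B + 1 : ℕ) : ℤ) - 2 * (k : ℤ) - (d + 1)) = qp B := by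
        rw [show ((k + A + B + 1 : ℕ) : ℤ) - 2 * (k : ℤ) - (d + 1) = ((B : ℕ) : ℤ) by
          push_cast; omega, qpz_coe]
      have q2 : qpz (((k + A + B + 1 : ℕ) : ℤ) - 2 * (k : ℤ) - d) = qp (B + 1) := by
        rw [show ((k + A + B + 1 : ℕ) : ℤ) - 2 * (k : ℤ) - d = ((B + 1 : ℕ) : ℤ) by
          push_cast; omega, qpz_coe]
      have q3 : qpz ((k : ℤ) + (d + 1)) = qp (A + 1) := by
        rw [show (k : ℤ) + (d + 1) = ((A + 1 : ℕ) : ℤ) by push_cast; omega, qpz_coe]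
      have q4 : qpz ((k : ℤ) + d) = qp A := by rw [hA, qpz_coe]
      have q5 : qpz (((k + 1 : ℕ) : ℤ) + d) = qp (A + 1) := by
        rw [show ((k + 1 : ℕ) : ℤ) + d = ((A + 1 : ℕ) : ℤ) by push_cast; omega, qpz_coe]
      have r6 : ((k + A + B + 1 : ℕ) : ℤ) - 2 * ((k + 1 : ℕ) : ℤ) - d = (B : ℤ) - 1 := by
        push_cast; omega
      have rLd : ((k + A + B + 1 : ℕ) : ℤ) - d = ((B + 1 + 2 * k : ℕ) : ℤ) := by
        push_cast; omega
      have eA : (k : ℤ) * ((k : ℤ) + (d + 1) - n)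
          = (k : ℤ) * ((k : ℤ) + d - (n + 1)) + ((2 * k : ℕ) : ℤ) := by push_cast; ring
      have eC : (k : ℤ) * ((k : ℤ) + (d + 1) - (n + 1))
          = (k : ℤ) * ((k : ℤ) + d - (n + 1)) + ((k : ℕ) : ℤ) := by push_cast; ring
      have eD : (k : ℤ) * ((k : ℤ) + d - n)
          = (k : ℤ) * ((k : ℤ) + d - (n + 1)) + ((k : ℕ) : ℤ) := by push_cast; ring
      have eE : (k : ℤ) * ((k : ℤ) + d - (n - 1))
          = (k : ℤ) * ((k : ℤ) + d - (n + 1)) + ((2 * k : ℕ) : ℤ) := by push_cast; ring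
      have eW : n + ((k + 1 : ℕ) : ℤ) * (((k + 1 : ℕ) : ℤ) + d - n)
          = (k : ℤ) * ((k : ℤ) + d - (n + 1)) + ((2 * k + A + 1 : ℕ) : ℤ) := by
        push_cast; linear_combination hA
      rw [Wf, Wf,
        ← zpow_add₀ qq_ne n (((k + 1 : ℕ) : ℤ) * (((k + 1 : ℕ) : ℤ) + d - n)),
        eA, eC, eD, eE, eW, q1, q2, q3, q4, q5, r6, rLd]
      rw [div_qpz_pred]
      simp only [mul_one, zpow_add₀ qq_ne, zpow_natCast]
      rw [qp_succ A, qp_succ B, qp_succ k]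
      have hx : qq ^ k ≠ 0 := pow_ne_zero k qq_ne
      have hy : qq ^ n ≠ 0 := zpow_ne_zero n qq_ne
      have h2 := qp_ne_zero k
      have h3 := qp_ne_zero A
      have h4 := qp_ne_zero B
      have h5 := qp_ne_zero (k + A + B + 1)
      have hsA := one_sub_ne A
      have hsB := one_sub_ne B
      have hsk := one_sub_ne k
      generalize hSa : (1 : RatFunc ℚ) - qq ^ (A + 1) = Sa at hsA ⊢
      generalize hSb : (1 : RatFunc ℚ) - qq ^ (B + 1) = Sb at hsB ⊢
      generalize hSk : (1 : RatFunc ℚ) - qq ^ (k + 1) = Sk at hsk ⊢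
      simp only [← mul_div_assoc]
      have hD : qp k * qp A * qp B * Sa * Sb * Sk ≠ 0 :=
        mul_ne_zero (mul_ne_zero (mul_ne_zero (mul_ne_zero (mul_ne_zero h2 h3) h4) hsA) hsB) hsk
      have Ra : ∀ N : RatFunc ℚ, N / (qp k * (qp A * Sa) * qp B)
          = N * (Sb * Sk) / (qp k * qp A * qp B * Sa * Sb * Sk) := fun N => by
        rw [div_eq_div_iff (mul_ne_zero (mul_ne_zero h2 (mul_ne_zero h3 hsA)) h4) hD]; ring
      have Rb : ∀ N : RatFunc ℚ, N / (qp k * qp A * (qp B * Sb))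
          = N * (Sa * Sk) / (qp k * qp A * qp B * Sa * Sb * Sk) := fun N => by
        rw [div_eq_div_iff (mul_ne_zero (mul_ne_zero h2 h3) (mul_ne_zero h4 hsB)) hD]; ring
      have Rc : ∀ N : RatFunc ℚ, N / (qp k * Sk * (qp A * Sa) * qp B)
          = N * Sb / (qp k * qp A * qp B * Sa * Sb * Sk) := fun N => by
        rw [div_eq_div_iff (mul_ne_zero (mul_ne_zero (mul_ne_zero h2 hsk) (mul_ne_zero h3 hsA)) h4)
          hD]; ring
      simp only [Ra, Rb, Rc, ← add_div, div_sub_div_same]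
      rw [div_eq_div_iff hD hD, ← hSa, ← hSb, ← hSk]
      ring

/-- `T(n,d+1,L) + q^{L-d} T(n+1,d,L)
      = q^L T(n+1,d+1,L) + q^n T(n,d,L) + (1-q^n) T(n-1,d,L)`. -/
theorem qT_combined_identity (n d : ℤ) (L : ℕ) :
    qT n (d + 1) L + qq ^ ((L : ℤ) - d) * qT (n + 1) d L =
      qq ^ (L : ℤ) * qT (n + 1) (d + 1) L + qq ^ n * qT n d L +
        (1 - qq ^ n) * qT (n - 1) d L := by
  rw [← sub_eq_zero]
  have h : qT n (d + 1) L + qq ^ ((L : ℤ) - d) * qT (n + 1) d L -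
      (qq ^ (L : ℤ) * qT (n + 1) (d + 1) L + qq ^ n * qT n d L +
        (1 - qq ^ n) * qT (n - 1) d L)
      = ∑ k ∈ Finset.range (L + 1), (Wf n d L (k + 1) - Wf n d L k) := by
    simp only [qT, Finset.mul_sum]
    rw [← Finset.sum_add_distrib, ← Finset.sum_add_distrib, ← Finset.sum_add_distrib,
      ← Finset.sum_sub_distrib]
    refine Finset.sum_congr rfl fun k hk => ?_
    exact termwise n d L k (Nat.lt_succ_iff.mp (Finset.mem_range.mp hk))
  rw [h, Finset.sum_range_sub (f := fun j => Wf n d L j), Wf_top, Wf_zero, sub_zero]
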